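/- Let u = u_0 + u_1 τ + ⋯ + u_s τ^s ∈ k{τ} with k = F_{q^n}, u_0 ≠ 0 and u_s ≠ 0. Let P̄_{u,T}(x) ∈ F_q[x] be the characteristic polynomial of π = τ^n acting on the root space of u(x). Then Nr_{k/F_q}(u_0/u_s) = (−1)^{s(n−1)} P̄_{u,T}(0). -/

import Mathlib

open Polynomial Matrix

section Helpers

variable {F Ω : Type} [Field F] [Fintype F] [Field Ω] [Algebra F Ω] {q : ℕ}

lemma exists_frob (hq : Fintype.card F = q) (m : ℕ) :
    ∃ φ : Ω →+* Ω, (∀ x, φ x = x ^ q ^ m) ∧ (∀ a : F, φ (algebraMap F Ω a) = algebraMap F Ω a) := by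
  obtain ⟨p, hp⟩ := CharP.exists F
  have hprime : p.Prime := CharP.char_is_prime F p
  haveI : Fact p.Prime := ⟨hprime⟩
  haveI : CharP Ω p := charP_of_injective_algebraMap (algebraMap F Ω).injective p
  haveI : ExpChar Ω p := ExpChar.prime hprime
  obtain ⟨f, hf⟩ := FiniteField.card F p
  refine ⟨iterateFrobenius Ω p (f * m), fun x => ?_, fun a => ?_⟩
  · rw [iterateFrobenius_def, ← hq, hf.2, pow_mul]
  · rw [iterateFrobenius_def, ← map_pow, pow_mul, ← hf.2, hq]
    congr 1
    rw [← hq, FiniteField.pow_card_pow]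

noncomputable def Mmat (q m : ℕ) (e : Fin m → Ω) : Matrix (Fin m) (Fin m) Ω :=
  Matrix.of fun i j => e i ^ q ^ (j : ℕ)

/-- Linearity of the Moore matrix construction over `F`-linear combinations. -/
lemma Mmat_linear (hq : Fintype.card F = q) (m : ℕ) (A : Matrix (Fin m) (Fin m) F)
    (e : Fin m → Ω) :
    Mmat q m (fun i => ∑ l, algebraMap F Ω (A i l) * e l)
      = A.map (algebraMap F Ω) * Mmat q m e := by
  ext i j
  obtain ⟨φ, hφ, hφa⟩ := exists_frob (Ω := Ω) hq (j : ℕ)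
  simp only [Mmat, Matrix.of_apply, Matrix.mul_apply, Matrix.map_apply, ← hφ, map_sum, _root_.map_mul, hφa]

/-- If the last row is an `F`-combination of the others, the Moore determinant vanishes. -/
lemma det_snoc_zero (hq : Fintype.card F = q) (m : ℕ) (e : Fin m → Ω) (c : Fin m → F) (w : Ω)
    (hw : w = ∑ i, algebraMap F Ω (c i) * e i) :
    (Mmat q (m + 1) (Fin.snoc e w)).det = 0 := by
  rw [← Matrix.exists_vecMul_eq_zero_iff]
  refine ⟨Fin.snoc (fun i => -(algebraMap F Ω (c i))) 1, ?_, ?_⟩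
  · intro h
    have := congrFun h (Fin.last m)
    simp [Fin.snoc_last] at this
  · funext j
    obtain ⟨φ, hφ, hφa⟩ := exists_frob (Ω := Ω) hq (j : ℕ)
    have hwj : w ^ q ^ (j : ℕ) = ∑ i, algebraMap F Ω (c i) * e i ^ q ^ (j : ℕ) := by
      rw [← hφ, hw, map_sum]
      exact Finset.sum_congr rfl fun i _ => by rw [_root_.map_mul, hφa, hφ]
    simp only [Matrix.vecMul, dotProduct, Mmat, Matrix.of_apply, Pi.zero_apply]
    rw [Fin.sum_univ_castSucc]
    simp only [Fin.snoc_castSucc, Fin.snoc_last, one_mul, hwj]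
    rw [← Finset.sum_add_distrib]
    simp [neg_mul]
noncomputable def minorM (q m : ℕ) (e : Fin m → Ω) (j : Fin (m + 1)) :
    Matrix (Fin m) (Fin m) Ω :=
  Matrix.of fun i j' => e i ^ q ^ ((j.succAbove j' : Fin (m + 1)) : ℕ)

noncomputable def Gpoly (q m : ℕ) (e : Fin m → Ω) : Polynomial Ω :=
  ∑ j : Fin (m + 1), C ((-1 : Ω) ^ (m + (j : ℕ)) * (minorM q m e j).det) * X ^ q ^ (j : ℕ)

lemma Gpoly_coeff (q m : ℕ) (hq : 2 ≤ q) (e : Fin m → Ω) (j₀ : Fin (m + 1)) :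
    (Gpoly q m e).coeff (q ^ (j₀ : ℕ)) = (-1 : Ω) ^ (m + (j₀ : ℕ)) * (minorM q m e j₀).det := by
  rw [Gpoly, finset_sum_coeff]
  rw [Finset.sum_eq_single j₀]
  · rw [coeff_C_mul, coeff_X_pow, if_pos rfl, mul_one]
  · intro j _ hj
    rw [coeff_C_mul, coeff_X_pow, if_neg, mul_zero]
    intro h
    exact hj (Fin.ext (Nat.pow_right_injective hq h.symm))
  · simp

lemma minorM_last (q m : ℕ) (e : Fin m → Ω) : minorM q m e (Fin.last m) = Mmat q m e := by
  ext i j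
  simp [minorM, Mmat, Fin.succAbove_last]

lemma Gpoly_coeff_top (q m : ℕ) (hq : 2 ≤ q) (e : Fin m → Ω) :
    (Gpoly q m e).coeff (q ^ m) = (Mmat q m e).det := by
  have := Gpoly_coeff q m hq e (Fin.last m)
  rw [Fin.val_last] at this
  rw [this, minorM_last, ← two_mul, pow_mul, neg_one_sq, one_pow, one_mul]

lemma Gpoly_coeff_one (q m : ℕ) (hq : 2 ≤ q) (e : Fin m → Ω)
    (φ : Ω →+* Ω) (hφ : ∀ x, φ x = x ^ q) :
    (Gpoly q m e).coeff 1 = (-1 : Ω) ^ m * (Mmat q m e).det ^ q := by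
  have h0 : (1 : ℕ) = q ^ ((0 : Fin (m + 1)) : ℕ) := by simp
  rw [h0, Gpoly_coeff q m hq e 0]
  have : minorM q m e 0 = (Mmat q m e).map φ := by
    ext i j
    simp only [minorM, Mmat, Matrix.map_apply, Matrix.of_apply, hφ, ← pow_mul]
    rw [Fin.succAbove_zero]
    simp [Fin.val_succ, pow_succ]
  rw [this, ← RingHom.mapMatrix_apply, ← RingHom.map_det, hφ]
  simp

lemma Mmat_frob (q m nn : ℕ) (e : Fin m → Ω) (φ : Ω →+* Ω) (hφ : ∀ x, φ x = x ^ q ^ nn) :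
    Mmat q m (fun i => e i ^ q ^ nn) = (Mmat q m e).map φ := by
  ext i j
  simp only [Mmat, Matrix.map_apply, Matrix.of_apply, hφ, ← pow_mul]
  rw [mul_comm]


lemma Gpoly_eval (q m : ℕ) (e : Fin m → Ω) (x : Ω) :
    (Gpoly q m e).eval x = (Mmat q (m + 1) (Fin.snoc e x)).det := by
  rw [det_succ_row _ (Fin.last m), Gpoly, eval_finset_sum]
  refine Finset.sum_congr rfl fun j _ => ?_
  have h1 : (Mmat q (m+1) (Fin.snoc e x)).submatrix (Fin.last m).succAbove j.succAbove
        = minorM q m e j := by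
    ext i j''
    simp [Mmat, minorM, Fin.succAbove_last, Fin.snoc_castSucc]
  rw [h1]
  simp [Mmat, Fin.snoc_last, Fin.val_last]
  ring

lemma Gpoly_natDegree_le (q m : ℕ) (hq : 1 ≤ q) (e : Fin m → Ω) :
    (Gpoly q m e).natDegree ≤ q ^ m := by
  refine (natDegree_sum_le _ _).trans ?_
  simp only [Finset.fold_max_le]
  refine ⟨Nat.zero_le _, fun j _ => ?_⟩
  exact (natDegree_C_mul_le _ _).trans <| (natDegree_X_pow_le _).trans
    (Nat.pow_le_pow_right hq (by omega))

end Helpers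


section Moore
variable {F Ω : Type} [Field F] [Fintype F] [Field Ω] [Algebra F Ω] {q : ℕ}

lemma moore_det_ne_zero (hq : Fintype.card F = q) {m : ℕ} {e : Fin m → Ω}
    (he : LinearIndependent F e) : (Mmat q m e).det ≠ 0 := by
  induction m with
  | zero => simp [Mmat, Matrix.det_fin_zero]
  | succ m ih =>
    classical
    have hq2 : 2 ≤ q := hq ▸ Fintype.one_lt_card
    set e' : Fin m → Ω := e ∘ Fin.castSucc with he'def
    have he' : LinearIndependent F e' := he.comp _ (Fin.castSucc_injective m)
    have hD : (Mmat q m e').det ≠ 0 := ih he'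
    set G := Gpoly q m e' with hGdef
    have hGtop : G.coeff (q ^ m) = (Mmat q m e').det := Gpoly_coeff_top q m hq2 e'
    have hGne : G ≠ 0 := fun h => hD (by rw [← hGtop, h, Polynomial.coeff_zero])
    have hroots : ∀ w ∈ Submodule.span F (Set.range e'), G.IsRoot w := by
      intro w hw
      rw [Submodule.mem_span_range_iff_exists_fun] at hw
      obtain ⟨c, hc⟩ := hw
      have hcomb : w = ∑ i, algebraMap F Ω (c i) * e' i := by
        rw [← hc]
        exact Finset.sum_congr rfl fun i _ => Algebra.smul_def _ _
      have hz := det_snoc_zero hq m e' c w hcomb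
      rw [Polynomial.IsRoot, Gpoly_eval, hz]
    intro hdet
    have heval : G.eval (e (Fin.last m)) = 0 := by
      have hsnoc : Fin.snoc e' (e (Fin.last m)) = e := by
        funext i
        refine Fin.lastCases ?_ (fun j => ?_) i
        · simp
        · simp [he'def]
      rw [Gpoly_eval, hsnoc, hdet]
    -- counting roots
    have hcardspan : Nat.card (Submodule.span F (Set.range e')) = q ^ m := by
      have b : Module.Basis (Fin m) F ↥(Submodule.span F (Set.range e')) := Module.Basis.span he'
      have h1 : Nat.card ↥(Submodule.span F (Set.range e')) = Nat.card (Fin m → F) :=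
        Nat.card_congr b.equivFun.toEquiv
      rw [h1, Nat.card_eq_fintype_card]
      simp [hq]
    have hsubset : (Submodule.span F (Set.range e') : Set Ω) ⊆ ↑G.roots.toFinset := by
      intro w hw
      rw [Finset.mem_coe, Multiset.mem_toFinset, Polynomial.mem_roots hGne]
      exact hroots w hw
    have hcardle : (G.roots.toFinset.card : ℕ) ≤ q ^ m :=
      le_trans (Multiset.toFinset_card_le _)
        (le_trans (Polynomial.card_roots' G) (Gpoly_natDegree_le q m (by omega) e'))
    have hseteq : (Submodule.span F (Set.range e') : Set Ω) = ↑G.roots.toFinset := by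
      apply Set.eq_of_subset_of_ncard_le hsubset
      rw [Set.ncard_coe_finset]
      calc (G.roots.toFinset.card : ℕ) ≤ q ^ m := hcardle
        _ = (Submodule.span F (Set.range e') : Set Ω).ncard := by
            rw [← Nat.card_coe_set_eq]
            exact hcardspan.symm
    have hmem : e (Fin.last m) ∈ Submodule.span F (Set.range e') := by
      rw [← SetLike.mem_coe, hseteq, Finset.mem_coe, Multiset.mem_toFinset,
        Polynomial.mem_roots hGne]
      exact heval
    have hni := he.notMem_span_image (s := Set.range Fin.castSucc) (x := Fin.last m)
      (by simp [Fin.exists_castSucc_eq])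
    rw [← Set.range_comp] at hni
    exact hni hmem
end Moore

/-- The twisted polynomial ring `R = k{τ}` over `k = F_{q^n}`, axiomatized. -/
structure TwistedPolynomialRing (q : ℕ) (k : Type) [Field k] (R : Type) [Ring R] [Module k R] where
  ι : k →+* R
  τ : R
  tau_comm : ∀ a : k, τ * ι a = ι (a ^ q) * τ
  smul_def : ∀ (a : k) (r : R), a • r = ι a * r
  basis : Module.Basis ℕ k R
  basis_eq : ∀ i : ℕ, basis i = τ ^ i

variable {q : ℕ} {k R : Type} [Field k] [Ring R] [Module k R]

/-- The action of `f = Σ aᵢ τ^i` as the `F_q`-linear polynomial `x ↦ Σ aᵢ x^{q^i}`. -/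
noncomputable def TwistedPolynomialRing.act (T : TwistedPolynomialRing q k R)
    {Ω : Type} [CommRing Ω] [Algebra k Ω] (f : R) (x : Ω) : Ω :=
  (T.basis.repr f).sum fun i a => algebraMap k Ω a * x ^ q ^ i

/-- **The norm identity `Nr_{k/F_q}(u₀/u_s) = (−1)^{s(n−1)} P̄_{u,T}(0)`.**
Let `u = u₀ + u₁τ + ⋯ + u_s τ^s ∈ k{τ}` with `k = F_{q^n}`, `u₀ ≠ 0`, `u_s ≠ 0`.
Let `W` be the root space of `u(x)` in an algebraic closure of `k`, and `π_W` the
`F_q`-linear action of `π : β ↦ β^{q^n}` on `W`, with characteristic polynomial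
`P̄_{u,T}(x)`.  Then `Nr_{k/F_q}(u₀/u_s) = (−1)^{s(n−1)} · P̄_{u,T}(0)`,
where `Nr_{k/F_q}(a) = a^{1+q+⋯+q^{n−1}}`. -/
theorem norm_eq_charpoly_constant_term
    {n s : ℕ} (hn : 0 < n) (hs : 0 < s)
    {F : Type} [Field F] [Fintype F] (hq : Fintype.card F = q)
    [Fintype k] [Algebra F k] (hk : Fintype.card k = q ^ n)
    (T : TwistedPolynomialRing q k R)
    {Ω : Type} [Field Ω] [Algebra k Ω] [Algebra F Ω] [IsScalarTower F k Ω] [IsAlgClosed Ω]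
    (u : R) (hu0 : T.basis.repr u 0 ≠ 0) (hus : T.basis.repr u s ≠ 0)
    (htop : ∀ i : ℕ, s < i → T.basis.repr u i = 0)
    (W : Submodule F Ω) (hW : ∀ x : Ω, x ∈ W ↔ T.act u x = 0)
    [Module.Finite F W]
    (πW : W →ₗ[F] W) (hπ : ∀ x : W, (πW x : Ω) = (x : Ω) ^ q ^ n) :
    (T.basis.repr u 0 / T.basis.repr u s) ^ (∑ i ∈ Finset.range n, q ^ i) =
      algebraMap F k ((-1) ^ (s * (n - 1)) * (LinearMap.charpoly πW).eval 0) := by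
  classical
  have hq2 : 2 ≤ q := hq ▸ Fintype.one_lt_card
  set v : ℕ → Ω := fun i => algebraMap k Ω (T.basis.repr u i) with hv
  have hinj : Function.Injective (algebraMap k Ω) := (algebraMap k Ω).injective
  have hv0 : v 0 ≠ 0 := by simp only [hv, ne_eq, _root_.map_eq_zero]; exact hu0
  have hvs : v s ≠ 0 := by simp only [hv, ne_eq, _root_.map_eq_zero]; exact hus
  set U : Polynomial Ω := ∑ i ∈ Finset.range (s+1), Polynomial.C (v i) * Polynomial.X ^ q ^ i
    with hU
  have hUeval : ∀ x : Ω, U.eval x = T.act u x := by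
    intro x
    rw [TwistedPolynomialRing.act,
      Finsupp.sum_of_support_subset _ (s := Finset.range (s+1)) ?_ _ ?_]
    · rw [hU, Polynomial.eval_finset_sum]
      exact Finset.sum_congr rfl fun i _ => by simp; exact Or.inl rfl
    · intro i hi
      simp only [Finsupp.mem_support_iff] at hi
      simp only [Finset.mem_range]
      by_contra hlt
      exact hi (htop i (by omega))
    · intro i _
      simp
  have hUcoeff : ∀ i : ℕ, i ≤ s → U.coeff (q ^ i) = v i := by
    intro i hi
    rw [hU, Polynomial.finset_sum_coeff]
    rw [Finset.sum_eq_single i]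
    · rw [Polynomial.coeff_C_mul, Polynomial.coeff_X_pow, if_pos rfl, mul_one]
    · intro j _ hj
      rw [Polynomial.coeff_C_mul, Polynomial.coeff_X_pow, if_neg, mul_zero]
      exact fun h => hj (Nat.pow_right_injective hq2 h.symm)
    · intro h
      exact absurd (Finset.mem_range.mpr (by omega)) h
  have hUne : U ≠ 0 := fun h => hvs (by rw [← hUcoeff s le_rfl, h, Polynomial.coeff_zero])
  have hUdeg_le : U.natDegree ≤ q ^ s := by
    refine (Polynomial.natDegree_sum_le _ _).trans ?_
    simp only [Finset.fold_max_le]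
    refine ⟨Nat.zero_le _, fun j hj => ?_⟩
    refine (Polynomial.natDegree_C_mul_le _ _).trans <| (Polynomial.natDegree_X_pow_le _).trans ?_
    exact Nat.pow_le_pow_right (by omega) (by simpa using Nat.lt_succ_iff.mp (Finset.mem_range.mp hj))
  have hUdeg : U.natDegree = q ^ s :=
    le_antisymm hUdeg_le (Polynomial.le_natDegree_of_ne_zero (by rw [hUcoeff s le_rfl]; exact hvs))
  have hUlead : U.leadingCoeff = v s := by
    rw [Polynomial.leadingCoeff, hUdeg, hUcoeff s le_rfl]
  -- characteristic facts
  have hqΩ : (q : Ω) = 0 := by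
    obtain ⟨p, hp⟩ := CharP.exists F
    have hprime : p.Prime := CharP.char_is_prime F p
    haveI : CharP Ω p := charP_of_injective_algebraMap (algebraMap F Ω).injective p
    obtain ⟨f, hf⟩ := FiniteField.card F p
    rw [← hq, hf.2]
    push_cast
    rw [CharP.cast_eq_zero Ω p, zero_pow]
    exact_mod_cast f.ne_zero
  have hUder : Polynomial.derivative U = Polynomial.C (v 0) := by
    rw [hU, map_sum, Finset.sum_range_succ']
    have h0 : Polynomial.derivative (Polynomial.C (v 0) * Polynomial.X ^ q ^ 0)
        = Polynomial.C (v 0) := by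
      simp
    rw [h0]
    have hrest : ∀ i ∈ Finset.range s, Polynomial.derivative
        (Polynomial.C (v (i+1)) * Polynomial.X ^ q ^ (i+1)) = 0 := by
      intro i _
      rw [Polynomial.derivative_C_mul_X_pow]
      have : ((q ^ (i+1) : ℕ) : Ω) = 0 := by
        push_cast
        rw [hqΩ, zero_pow (by omega)]
      rw [this, mul_zero, Polynomial.C_0, zero_mul]
    rw [Finset.sum_congr rfl hrest, Finset.sum_const, smul_zero, zero_add]
  have hsep : U.Separable :=
    ⟨0, Polynomial.C (v 0)⁻¹, by
      rw [hUder, zero_mul, zero_add, ← Polynomial.C_mul, inv_mul_cancel₀ hv0, Polynomial.C_1]⟩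
  have hsplits : U.Splits := IsAlgClosed.splits U
  have hnodup : U.roots.Nodup := Polynomial.nodup_roots hsep
  have hcroots : Multiset.card U.roots = q ^ s := by
    rw [← hUdeg]
    exact (Polynomial.splits_iff_card_roots.mp hsplits)
  have hmemroots : ∀ x : Ω, x ∈ U.roots ↔ x ∈ W := by
    intro x
    rw [Polynomial.mem_roots hUne, Polynomial.IsRoot, hUeval, hW]
  -- the product over roots
  set Wfin : Finset Ω := U.roots.toFinset with hWfin
  have hWfinval : Wfin.val = U.roots := Multiset.dedup_eq_self.mpr hnodup
  set PP : Polynomial Ω := ∏ w ∈ Wfin, (Polynomial.X - Polynomial.C w) with hPP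
  have hPPmul : PP = (U.roots.map fun a => Polynomial.X - Polynomial.C a).prod := by
    rw [hPP, Finset.prod, hWfinval]
  have hfact : U = Polynomial.C (v s) * PP := by
    rw [hPPmul, ← hUlead]
    exact hsplits.eq_prod_roots
  have hPPmonic : PP.Monic :=
    Polynomial.monic_prod_of_monic _ _ fun w _ => Polynomial.monic_X_sub_C w
  have hWfincard : Wfin.card = q ^ s := by
    rw [hWfin, Multiset.toFinset_card_of_nodup hnodup, hcroots]
  have hPPdeg : PP.natDegree = q ^ s := by
    rw [hPP, Polynomial.natDegree_prod _ _ (fun w _ => Polynomial.X_sub_C_ne_zero w)]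
    simp [hWfincard]
  -- dimension of W is s
  have hWsetEq : (W : Set Ω) = ↑Wfin := by
    ext x
    rw [Finset.mem_coe, Multiset.mem_toFinset, hmemroots, SetLike.mem_coe]
  have hWcard : Nat.card W = q ^ s := by
    have h1 : Nat.card W = (W : Set Ω).ncard := Nat.card_coe_set_eq _
    rw [h1, hWsetEq, Set.ncard_coe_finset, hWfincard]
  have hrank : Module.finrank F W = s := by
    have b := Module.finBasis F W
    have h1 : Nat.card W = Nat.card (Fin (Module.finrank F W) → F) :=
      Nat.card_congr b.equivFun.toEquiv
    rw [hWcard, Nat.card_eq_fintype_card] at h1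
    simp only [Fintype.card_fun, Fintype.card_fin, hq] at h1
    exact (Nat.pow_right_injective hq2 h1.symm)
  set bW : Module.Basis (Fin s) F W := (Module.finBasis F W).reindex (finCongr hrank) with hbW
  set e : Fin s → Ω := fun i => ((bW i : Ω)) with he
  have hind : LinearIndependent F e := by
    have h1 := bW.linearIndependent
    exact h1.map' W.subtype W.ker_subtype
  set D : Ω := (Mmat q s e).det with hD
  have hDne : D ≠ 0 := moore_det_ne_zero hq hind
  have hrepre : ∀ w : W, (w : Ω) = ∑ i, algebraMap F Ω (bW.repr w i) * e i := by
    intro w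
    conv_lhs => rw [← bW.sum_repr w]
    rw [Submodule.coe_sum]
    exact Finset.sum_congr rfl fun i _ => by
      rw [Submodule.coe_smul, Algebra.smul_def]
  -- G polynomial
  set G : Polynomial Ω := Gpoly q s e with hG
  have hGtop : G.coeff (q ^ s) = D := Gpoly_coeff_top q s hq2 e
  have hGne : G ≠ 0 := fun h => hDne (by rw [← hGtop, h, Polynomial.coeff_zero])
  have hGroot : ∀ x ∈ U.roots, G.IsRoot x := by
    intro x hx
    have hxW : x ∈ W := (hmemroots x).mp hx
    have hcomb : x = ∑ i, algebraMap F Ω (bW.repr ⟨x, hxW⟩ i) * e i := hrepre ⟨x, hxW⟩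
    have hz := det_snoc_zero hq s e (fun i => bW.repr ⟨x, hxW⟩ i) x hcomb
    rw [Polynomial.IsRoot, hG, Gpoly_eval, hz]
  have hdvd : PP ∣ G := by
    have hle : U.roots ≤ G.roots := by
      rw [Multiset.le_iff_count]
      intro a
      by_cases ha : a ∈ U.roots
      · rw [Multiset.count_eq_one_of_mem hnodup ha]
        rw [Nat.one_le_iff_ne_zero, ← Nat.pos_iff_ne_zero, Multiset.count_pos]
        rw [Polynomial.mem_roots hGne]
        exact hGroot a ha
      · rw [Multiset.count_eq_zero_of_notMem ha]
        exact Nat.zero_le _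
    calc PP = (U.roots.map fun a => Polynomial.X - Polynomial.C a).prod := hPPmul
      _ ∣ (G.roots.map fun a => Polynomial.X - Polynomial.C a).prod :=
          Multiset.prod_dvd_prod_of_le (Multiset.map_le_map hle)
      _ ∣ G := G.prod_multiset_X_sub_C_dvd
  obtain ⟨h, hGh⟩ := hdvd
  have hhne : h ≠ 0 := fun hh => hGne (by rw [hGh, hh, mul_zero])
  have hGdeg : G.natDegree = q ^ s :=
    le_antisymm (Gpoly_natDegree_le q s (by omega) e)
      (Polynomial.le_natDegree_of_ne_zero (by rw [hGtop]; exact hDne))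
  have hhdeg : h.natDegree = 0 := by
    have := Polynomial.natDegree_mul (Polynomial.Monic.ne_zero hPPmonic) hhne
    rw [← hGh, hGdeg, hPPdeg] at this
    omega
  have hhC : h = Polynomial.C D := by
    have h1 : h = Polynomial.C (h.coeff 0) := Polynomial.eq_C_of_natDegree_eq_zero hhdeg
    have h2 : G.coeff (q ^ s) = PP.coeff (q ^ s) * h.coeff 0 := by
      conv_lhs => rw [hGh, h1]
      rw [Polynomial.coeff_mul_C]
    rw [hGtop, ← hPPdeg, Polynomial.Monic.coeff_natDegree hPPmonic, one_mul] at h2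
    rw [h1, ← h2]
  -- coefficient of X at 1
  set t : Ω := PP.coeff 1 with ht
  have hv0t : v 0 = v s * t := by
    have h1 := congrArg (fun P => Polynomial.coeff P 1) hfact
    rw [Polynomial.coeff_C_mul] at h1
    rw [← h1, ← pow_zero q, hUcoeff 0 (by omega)]
  have hGt : (-1 : Ω) ^ s * D ^ q = t * D := by
    obtain ⟨φ, hφ, hφa⟩ := exists_frob (F := F) (Ω := Ω) hq 1
    have hφ' : ∀ x : Ω, φ x = x ^ q := fun x => by rw [hφ, pow_one]
    have h1 : G.coeff 1 = (-1 : Ω) ^ s * (Mmat q s e).det ^ q :=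
      Gpoly_coeff_one q s hq2 e φ hφ'
    have h2 := congrArg (fun P => Polynomial.coeff P 1) (hGh.trans (by rw [hhC]))
    rw [Polynomial.coeff_mul_C] at h2
    rw [ht, ← h2, h1, hD]
  have hkey1 : v 0 / v s = (-1 : Ω) ^ s * D ^ (q - 1) := by
    have htval : t = (-1 : Ω) ^ s * D ^ (q - 1) := by
      apply mul_right_cancel₀ hDne
      rw [← hGt, mul_assoc, ← pow_succ]
      congr 2
      omega
    rw [hv0t, htval, mul_comm (v s) _, mul_div_assoc, div_self hvs, mul_one]
  -- the Frobenius side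
  set A : Matrix (Fin s) (Fin s) F := LinearMap.toMatrix bW bW πW with hA
  have hAe : ∀ i, e i ^ q ^ n = ∑ l, algebraMap F Ω (A l i) * e l := by
    intro i
    have h1 : (πW (bW i) : Ω) = e i ^ q ^ n := hπ (bW i)
    have h2 : (πW (bW i) : Ω) = ∑ l, algebraMap F Ω (bW.repr (πW (bW i)) l) * e l :=
      hrepre (πW (bW i))
    rw [← h1, h2]
    exact Finset.sum_congr rfl fun l _ => by rw [hA, LinearMap.toMatrix_apply]
  have hdet1 : D ^ q ^ n = algebraMap F Ω A.det * D := by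
    obtain ⟨φ, hφ, hφa⟩ := exists_frob (F := F) (Ω := Ω) hq n
    have hml : Mmat q s (fun i => e i ^ q ^ n)
        = A.transpose.map (algebraMap F Ω) * Mmat q s e := by
      have : (fun i => e i ^ q ^ n) = fun i => ∑ l, algebraMap F Ω (A.transpose i l) * e l := by
        funext i
        rw [hAe i]
        exact Finset.sum_congr rfl fun l _ => by rw [Matrix.transpose_apply]
      rw [this, Mmat_linear hq s A.transpose e]
    have hfr : Mmat q s (fun i => e i ^ q ^ n) = (Mmat q s e).map φ :=
      Mmat_frob q s n e φ hφ
    have h1 : ((Mmat q s e).map φ).det = D ^ q ^ n := by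
      rw [← RingHom.mapMatrix_apply, ← RingHom.map_det, hφ, hD]
    have h2 := congrArg Matrix.det (hfr.symm.trans hml)
    rw [h1, Matrix.det_mul, ← RingHom.mapMatrix_apply, ← RingHom.map_det,
      Matrix.det_transpose, ← hD] at h2
    exact h2
  have hdetA : algebraMap F Ω A.det = D ^ (q ^ n - 1) := by
    apply mul_right_cancel₀ hDne
    rw [← hdet1, ← pow_succ]
    congr 1
    have : 1 ≤ q ^ n := Nat.one_le_pow _ _ (by omega)
    omega
  -- charpoly
  have hdetpi : LinearMap.det πW = A.det := (LinearMap.det_toMatrix bW πW).symm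
  have hcp : (LinearMap.charpoly πW).eval 0 = (-1 : F) ^ s * LinearMap.det πW := by
    have h1 := LinearMap.det_eq_sign_charpoly_coeff πW
    rw [hrank] at h1
    rw [← Polynomial.coeff_zero_eq_eval_zero, h1, ← mul_assoc, ← mul_pow]
    simp
  -- numerics
  set ν : ℕ := ∑ i ∈ Finset.range n, q ^ i with hν
  have hgeom : ∀ m : ℕ, (q - 1) * (∑ i ∈ Finset.range m, q ^ i) + 1 = q ^ m := by
    intro m
    induction m with
    | zero => simp
    | succ m ih =>
      rw [Finset.sum_range_succ]
      calc (q - 1) * ((∑ i ∈ Finset.range m, q ^ i) + q ^ m) + 1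
          = ((q - 1) * (∑ i ∈ Finset.range m, q ^ i) + 1) + (q - 1) * q ^ m := by ring
        _ = q ^ m + (q - 1) * q ^ m := by rw [ih]
        _ = (q - 1 + 1) * q ^ m := by ring
        _ = q * q ^ m := by rw [Nat.sub_add_cancel (by omega)]
        _ = q ^ (m + 1) := (pow_succ' q m).symm
  have hexp : (q - 1) * ν = q ^ n - 1 := by
    have h1 := hgeom n
    rw [← hν] at h1
    omega
  have hsign : (-1 : Ω) ^ (s * ν) = (-1 : Ω) ^ (s * n) := by
    by_cases hone : (-1 : Ω) = 1
    · rw [hone, one_pow, one_pow]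
    · obtain ⟨p, hp⟩ := CharP.exists F
      have hprime : p.Prime := CharP.char_is_prime F p
      haveI : CharP Ω p := charP_of_injective_algebraMap (algebraMap F Ω).injective p
      obtain ⟨f, hf⟩ := FiniteField.card F p
      have hp2 : p ≠ 2 := by
        intro hp2
        apply hone
        rw [neg_eq_iff_add_eq_zero]
        have h2 : ((2 : ℕ) : Ω) = 0 := by rw [← hp2]; exact CharP.cast_eq_zero Ω p
        push_cast at h2
        rw [one_add_one_eq_two, h2]
      have hqodd : Odd q := by
        rw [← hq, hf.2]
        exact (hprime.odd_of_ne_two hp2).pow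
      have hmodgen : ∀ m : ℕ, (∑ i ∈ Finset.range m, q ^ i) % 2 = m % 2 := by
        intro m
        induction m with
        | zero => simp
        | succ m ih =>
          rw [Finset.sum_range_succ, Nat.add_mod, ih]
          have h1 : q ^ m % 2 = 1 := Nat.odd_iff.mp hqodd.pow
          omega
      have hmod : ν % 2 = n % 2 := by rw [hν]; exact hmodgen n
      have hmod2 : (s * ν) % 2 = (s * n) % 2 := by
        rw [Nat.mul_mod, hmod, ← Nat.mul_mod]
      rcases Nat.even_or_odd (s * ν) with hE | hO
      · have hE2 : Even (s * n) := by rw [Nat.even_iff] at *; omega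
        rw [hE.neg_one_pow, hE2.neg_one_pow]
      · have hO2 : Odd (s * n) := by rw [Nat.odd_iff] at *; omega
        rw [hO.neg_one_pow, hO2.neg_one_pow]
  -- final assembly
  apply hinj
  rw [map_pow, map_div₀]
  have hLHS : ((algebraMap k Ω) ((T.basis.repr u) 0) / (algebraMap k Ω) ((T.basis.repr u) s)) = v 0 / v s := rfl
  rw [hLHS, hkey1, mul_pow, ← pow_mul, ← pow_mul, hexp]
  rw [← IsScalarTower.algebraMap_apply F k Ω]
  rw [hcp, hdetpi, _root_.map_mul, _root_.map_mul, map_pow, map_pow, map_neg]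
  simp only [_root_.map_one]
  rw [hdetA, hsign]
  have hnn : s * (n - 1) + s = s * n := by
    have h1 : n - 1 + 1 = n := by omega
    calc s * (n - 1) + s = s * ((n - 1) + 1) := by ring
      _ = s * n := by rw [h1]
  rw [← hnn, pow_add]
  ring
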